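/- Let Q be a commutative unital quantale and let Σ be the set of finitely generated proper ideals of Q with the quantale topology. If Σ is quasi-compact, then every maximal ideal of Q is finitely generated (i.e., Max(Q) ⊆ Σ). -/

import Mathlib

namespace QuantalePaper

/-- An ideal of a complete lattice: nonempty, downward closed, closed under binary joins. -/
structure QIdeal (Q : Type*) [CompleteLattice Q] where
  carrier : Set Q
  nonempty' : carrier.Nonempty
  sup_mem' : ∀ ⦃x⦄, x ∈ carrier → ∀ ⦃y⦄, y ∈ carrier → x ⊔ y ∈ carrier
  lower' : ∀ ⦃x⦄, x ∈ carrier → ∀ ⦃l : Q⦄, l ≤ x → l ∈ carrier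

namespace QIdeal

variable {Q : Type*} [CompleteLattice Q]

instance : SetLike (QIdeal Q) Q where
  coe := carrier
  coe_injective := by rintro ⟨a,_,_,_⟩ ⟨b,_,_,_⟩ h; simpa using h

instance : PartialOrder (QIdeal Q) := .ofSetLike (QIdeal Q) Q

/-- A proper ideal. -/
def IsProper (I : QIdeal Q) : Prop := (⊤ : Q) ∉ I

/-- A maximal ideal: a proper ideal maximal among proper ideals. -/
def IsMaximal (I : QIdeal Q) : Prop :=
  I.IsProper ∧ ∀ J : QIdeal Q, J.IsProper → I ≤ J → J = I

/-- A prime ideal. -/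
def IsPrime [Mul Q] (I : QIdeal Q) : Prop :=
  I.IsProper ∧ ∀ x y : Q, x * y ∈ I → x ∈ I ∨ y ∈ I

end QIdeal

variable {Q : Type*} [CompleteLattice Q]

/-- The subbasic closed set `I↑ ∩ Σ` inside the subtype of a class `S` of ideals. -/
def up (S : Set (QIdeal Q)) (I : QIdeal Q) : Set ↥S := {J : ↥S | (I : Set Q) ⊆ (J : QIdeal Q)}

/-- The quantale topology on a class `S` of ideals, generated by the sets `up S I`
as a subbasis of closed sets. -/
def qTop (S : Set (QIdeal Q)) : TopologicalSpace ↥S :=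
  .generateFrom {U | ∃ I : QIdeal Q, U = (up S I)ᶜ}

/-- `X↑` for a set `X` of ideals: members of `S` containing the intersection `⋀X`,
with `∅↑ = ∅`. -/
def upSet (S : Set (QIdeal Q)) (X : Set (QIdeal Q)) : Set ↥S :=
  {J : ↥S | X.Nonempty ∧ ∀ x : Q, (∀ I ∈ X, x ∈ I) → x ∈ (J : QIdeal Q)}

/-- A finitely generated ideal: generated by a finite subset `T`, i.e. consisting of the
elements below finite joins of elements of `Q & T`. -/
def IsFG [Mul Q] (I : QIdeal Q) : Prop :=
  ∃ T : Finset Q, ∀ x : Q, x ∈ I ↔ ∃ F : Finset Q,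
    (∀ a ∈ F, ∃ q : Q, ∃ s ∈ T, a = q * s) ∧ x ≤ F.sup id

/-- The principal ideal `↓t`. -/
def princ (t : Q) : QIdeal Q where
  carrier := {y | y ≤ t}
  nonempty' := ⟨t, le_refl t⟩
  sup_mem' := fun _ hx _ hy => sup_le hx hy
  lower' := fun _ hx _ hl => le_trans hl hx

lemma mem_princ {t x : Q} : x ∈ princ t ↔ x ≤ t := Iff.rfl

lemma princ_isFG [CommMonoid Q] [IsQuantale Q] (htop : (1 : Q) = ⊤) (t : Q) :
    IsFG (princ t) := by
  refine ⟨{t}, fun x => ?_⟩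
  constructor
  · intro hx
    refine ⟨{t}, fun a ha => ⟨1, t, Finset.mem_singleton_self t, ?_⟩, by simpa using mem_princ.1 hx⟩
    simp only [Finset.mem_singleton] at ha
    simp [ha]
  · rintro ⟨F, hF, hx⟩
    refine mem_princ.2 (le_trans hx (Finset.sup_le fun a ha => ?_))
    obtain ⟨q, s, hs, rfl⟩ := hF a ha
    simp only [Finset.mem_singleton] at hs
    rw [hs]
    calc q * t ≤ 1 * t := by
          rw [htop]; exact mul_le_mul_left le_top t
      _ = t := one_mul t

lemma up_closed (S : Set (QIdeal Q)) (I : QIdeal Q) :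
    @IsClosed ↥S (qTop S) (up S I) := by
  letI := qTop S
  rw [← isOpen_compl_iff]
  exact TopologicalSpace.isOpen_generateFrom_of_mem ⟨I, rfl⟩

theorem stmt6 [CommMonoid Q] [IsQuantale Q] (htop : (1 : Q) = ⊤) (S : Set (QIdeal Q))
    (hS : S = {I : QIdeal Q | IsFG I ∧ I.IsProper})
    (hcompact : @CompactSpace ↥S (qTop S)) :
    ∀ M : QIdeal Q, M.IsMaximal → M ∈ S := by
  intro M hM
  letI := qTop S
  obtain ⟨x₀, hx₀⟩ := M.nonempty'
  -- the family of closed sets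
  set Z : ↥(M : Set Q) → Set ↥S := fun i => up S (princ i.1) with hZ
  have hZclosed : ∀ i, IsClosed (Z i) := fun i => up_closed S _
  -- the intersection is nonempty
  have hne : (⋂ i, Z i).Nonempty := by
    by_contra hempty
    rw [Set.not_nonempty_iff_eq_empty] at hempty
    have hcpt : IsCompact (Set.univ : Set ↥S) := isCompact_univ
    obtain ⟨u, hu⟩ := hcpt.elim_finite_subfamily_closed Z hZclosed (by
      rw [Set.univ_inter, hempty])
    -- build a point of S in the finite intersection
    set b : Q := (u.sup fun i => i.1) ⊔ x₀ with hb
    have hbM : b ∈ M := by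
      have : ∀ (v : Finset ↥(M : Set Q)), (v.sup fun i => i.1) ⊔ x₀ ∈ M := by
        intro v
        classical
        induction v using Finset.induction with
        | empty => simpa using (show x₀ ∈ M from hx₀)
        | @insert a v ha ih =>
          rw [Finset.sup_insert, sup_assoc]
          exact M.sup_mem' a.2 ih
      exact this u
    have hbne : b ≠ ⊤ := fun h => hM.1 (h ▸ hbM)
    have hbS : princ b ∈ S := by
      rw [hS]
      refine ⟨princ_isFG htop b, fun h => hbne (top_le_iff.1 (mem_princ.1 h))⟩
    have : (⟨princ b, hbS⟩ : ↥S) ∈ Set.univ ∩ ⋂ i ∈ u, Z i := by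
      refine ⟨trivial, Set.mem_iInter₂.2 fun i hi => ?_⟩
      intro y hy
      exact mem_princ.2 (le_trans (mem_princ.1 hy)
        (le_trans (Finset.le_sup (f := fun i : ↥(M : Set Q) => i.1) hi) le_sup_left))
    rw [hu] at this
    exact this
  obtain ⟨⟨I, hIS⟩, hJ⟩ := hne
  have hMI : (M : Set Q) ⊆ (I : Set Q) := by
    intro x hx
    have := Set.mem_iInter.1 hJ ⟨x, hx⟩
    exact this (mem_princ.2 (le_refl x))
  have hIS' := hIS
  rw [hS] at hIS'
  have heq : I = M := hM.2 I hIS'.2 hMI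
  exact heq ▸ hIS

end QuantalePaper
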